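/- Consider N ≥ 1 agents with weights w_i > 0, past cumulative allocations a_i ≥ 0, remaining demands Y_i > 0, and remaining budget B with 0 < B ≤ Σ_{i=1}^N Y_i. Suppose μ > 0 satisfies Σ_{i=1}^N min{Y_i, max(w_i·μ − a_i, 0)} = B. Then the vector C* defined by C*_i = min{Y_i, max(w_i·μ − a_i, 0)} satisfies a_i + C*_i > 0 for all i, is feasible (0 ≤ C*_i ≤ Y_i and Σ_i C*_i ≤ B), and maximizes Σ_{i=1}^N w_i·log(a_i + C_i) over all C ∈ ℝ^N with 0 ≤ C_i ≤ Y_i for all i, Σ_i C_i ≤ B, and a_i + C_i > 0 for all i. (Correctness of the water-filling algorithm with past allocations, the per-step subproblem solved by SAFFE.) -/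

import Mathlib

open Finset

/-- Correctness of the water-filling algorithm with past allocations (the per-step
subproblem solved by SAFFE): if `μ > 0` satisfies
`∑ᵢ min {Y_i, (w_i μ − a_i)⁺} = B`, then `C*_i = min {Y_i, (w_i μ − a_i)⁺}` gives
strictly positive cumulative allocations `a_i + C*_i`, is feasible, and maximizes
`∑ᵢ w_i log (a_i + C_i)` over all feasible `C`. -/
theorem waterfilling_with_past_allocations
    (N : ℕ) (hN : 1 ≤ N) (w a Y : Fin N → ℝ)
    (hw : ∀ i, 0 < w i) (ha : ∀ i, 0 ≤ a i) (hY : ∀ i, 0 < Y i)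
    (B : ℝ) (hB : 0 < B) (hBle : B ≤ ∑ i, Y i)
    (μ : ℝ) (hμ : 0 < μ)
    (hlevel : ∑ i, min (Y i) (max (w i * μ - a i) 0) = B) :
    (∀ i, 0 < a i + min (Y i) (max (w i * μ - a i) 0)) ∧
    (∀ i, 0 ≤ min (Y i) (max (w i * μ - a i) 0)) ∧
    (∀ i, min (Y i) (max (w i * μ - a i) 0) ≤ Y i) ∧
    (∑ i, min (Y i) (max (w i * μ - a i) 0) ≤ B) ∧
    (∀ C : Fin N → ℝ, (∀ i, 0 ≤ C i) → (∀ i, C i ≤ Y i) → (∑ i, C i ≤ B) →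
      (∀ i, 0 < a i + C i) →
      ∑ i, w i * Real.log (a i + C i) ≤
        ∑ i, w i * Real.log (a i + min (Y i) (max (w i * μ - a i) 0))) := by
  set Cs : Fin N → ℝ := fun i => min (Y i) (max (w i * μ - a i) 0) with hCs
  have hCsnn : ∀ i, 0 ≤ Cs i := fun i => le_min (hY i).le (le_max_right _ _)
  have hpos : ∀ i, 0 < a i + Cs i := by
    intro i
    rcases le_or_gt (w i * μ - a i) 0 with h | h
    · have : 0 < a i := by nlinarith [mul_pos (hw i) hμ]
      linarith [hCsnn i]
    · have : 0 < Cs i := by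
        simp only [hCs]
        exact lt_min (hY i) (lt_max_of_lt_left h)
      linarith [ha i]
  refine ⟨hpos, hCsnn, fun i => min_le_left _ _, le_of_eq hlevel, ?_⟩
  intro C hC0 hCY hCB hCpos
  have key : ∀ i, w i * Real.log (a i + C i) ≤
      w i * Real.log (a i + Cs i) + (C i - Cs i) / μ := by
    intro i
    have hs : 0 < a i + Cs i := hpos i
    have h1 : Real.log (a i + C i) - Real.log (a i + Cs i) ≤
        (C i - Cs i) / (a i + Cs i) := by
      rw [← Real.log_div (ne_of_gt (hCpos i)) (ne_of_gt hs)]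
      have h := Real.log_le_sub_one_of_pos (div_pos (hCpos i) hs)
      have heq : (a i + C i) / (a i + Cs i) - 1 = (C i - Cs i) / (a i + Cs i) := by
        field_simp
        ring
      linarith
    have h2 : w i * (Real.log (a i + C i) - Real.log (a i + Cs i)) ≤
        w i * ((C i - Cs i) / (a i + Cs i)) :=
      mul_le_mul_of_nonneg_left h1 (hw i).le
    have hcore : w i * (C i - Cs i) * μ ≤ (C i - Cs i) * (a i + Cs i) := by
      rcases le_or_gt (Y i) (max (w i * μ - a i) 0) with h | h
      · have hCsv : Cs i = Y i := min_eq_left h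
        have hmx : max (w i * μ - a i) 0 = w i * μ - a i := by
          rcases max_cases (w i * μ - a i) (0 : ℝ) with ⟨he, _⟩ | ⟨he, _⟩
          · exact he
          · exfalso; rw [he] at h; linarith [hY i]
        rw [hmx] at h
        nlinarith [hCY i]
      · have hCsv : Cs i = max (w i * μ - a i) 0 := min_eq_right h.le
        rcases le_or_gt (w i * μ - a i) 0 with h2' | h2'
        · have : Cs i = 0 := by rw [hCsv, max_eq_right h2']
          rw [this]
          have hC0i := hC0 i
          nlinarith
        · have : Cs i = w i * μ - a i := by rw [hCsv, max_eq_left h2'.le]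
          rw [this]; ring_nf; nlinarith
    have h3 : w i * ((C i - Cs i) / (a i + Cs i)) ≤ (C i - Cs i) / μ := by
      rw [mul_div_assoc', div_le_div_iff₀ hs hμ]
      exact hcore
    linarith
  calc ∑ i, w i * Real.log (a i + C i)
      ≤ ∑ i, (w i * Real.log (a i + Cs i) + (C i - Cs i) / μ) :=
        Finset.sum_le_sum fun i _ => key i
    _ = ∑ i, w i * Real.log (a i + Cs i) + (∑ i, C i - ∑ i, Cs i) / μ := by
        rw [Finset.sum_add_distrib, ← Finset.sum_div, Finset.sum_sub_distrib]
    _ ≤ ∑ i, w i * Real.log (a i + Cs i) := by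
        have : (∑ i, C i - ∑ i, Cs i) / μ ≤ 0 := by
          apply div_nonpos_of_nonpos_of_nonneg _ hμ.le
          have : ∑ i, Cs i = B := hlevel
          linarith
        linarith
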